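/- Let T be a 1.5D terrain given by a continuous function f : ℝ → ℝ, let p_i, p_j be points on T with y(p_i) < y(p_j), and let T' be a connected portion of T (points with x-coordinate in an interval I). Suppose x(p_i) < x for all x ∈ I (p_i is to the left of T') and every point of T' is visible from p_i. Then the perpendicular bisector of p_i and p_j intersects T' in at most one point. -/

import Mathlib

/-- Euclidean distance between two points of `ℝ × ℝ`. -/
noncomputable def edist2 (p q : ℝ × ℝ) : ℝ :=
  Real.sqrt ((p.1 - q.1) ^ 2 + (p.2 - q.2) ^ 2)

/-- `p` sees `q` over the terrain given by `f`: every point of the segment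
`[p, q]` lies weakly above the graph of `f`. -/
def sees (f : ℝ → ℝ) (p q : ℝ × ℝ) : Prop :=
  ∀ t : ℝ, t ∈ Set.Icc (0 : ℝ) 1 →
    (1 - t) * p.2 + t * q.2 ≥ f ((1 - t) * p.1 + t * q.1)

lemma sqrt_eq_of_eq' {A B : ℝ} (hA : 0 ≤ A) (hB : 0 ≤ B)
    (h : Real.sqrt A = Real.sqrt B) : A = B := by
  have := congrArg (· ^ 2) h
  simpa [Real.sq_sqrt hA, Real.sq_sqrt hB] using this

lemma key_single_cross (f : ℝ → ℝ) (xi xj : ℝ) (hy : f xi < f xj)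
    (x1 x2 : ℝ) (h12 : x1 < x2) (hi1 : xi < x1)
    (hvis : sees f (xi, f xi) (x2, f x2))
    (e1 : (x1 - xi)^2 + (f x1 - f xi)^2 = (x1 - xj)^2 + (f x1 - f xj)^2)
    (e2 : (x2 - xi)^2 + (f x2 - f xi)^2 = (x2 - xj)^2 + (f x2 - f xj)^2) :
    False := by
  have hd : (0:ℝ) < x2 - xi := by linarith
  set t := (x1 - xi)/(x2 - xi) with htdef
  have ht0 : 0 ≤ t := div_nonneg (by linarith) hd.le
  have ht1 : t ≤ 1 := by rw [htdef, div_le_one hd]; linarith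
  have hx : (1 - t) * xi + t * x2 = x1 := by
    rw [htdef]; field_simp; ring
  have hv : (1 - t) * f xi + t * f x2 ≥ f x1 := by
    have h := hvis t ⟨ht0, ht1⟩
    simpa [hx] using h
  have hv' : (x2 - x1) * f xi + (x1 - xi) * f x2 ≥ (x2 - xi) * f x1 := by
    have h := mul_le_mul_of_nonneg_left hv hd.le
    have h1 : (x2 - xi) * (1 - t) = x2 - x1 := by rw [htdef]; field_simp; ring
    have h2 : (x2 - xi) * t = x1 - xi := by rw [htdef]; field_simp
    have h3 : (x2 - xi) * ((1 - t) * f xi + t * f x2)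
        = (x2 - x1) * f xi + (x1 - xi) * f x2 := by
      linear_combination f xi * h1 + f x2 * h2
    linarith [h, h3]
  have hE : (f xj - f xi) * (f x1 - f x2) = (xj - xi) * (x2 - x1) := by
    linear_combination (e1 - e2) / 2
  have hP : (xj - xi) * xi + (f xj - f xi) * f xi <
      (xj - xi) * x1 + (f xj - f xi) * f x1 := by
    nlinarith [e1, pow_pos (sub_pos.2 hy) 2, sq_nonneg (xj - xi)]
  have hb : (0:ℝ) < f xj - f xi := by linarith
  have A : 0 ≤ (f xj - f xi) * ((x2-x1)*f xi + (x1-xi)*f x2 - (x2-xi)*f x1) :=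
    mul_nonneg hb.le (by linarith)
  have B : (x1-xi) * ((f xj - f xi)*(f x1 - f x2)) = (x1-xi) * ((xj - xi)*(x2-x1)) := by
    rw [hE]
  have C : (x2-x1) * ((xj-xi)*xi + (f xj - f xi)*f xi) <
      (x2-x1) * ((xj-xi)*x1 + (f xj - f xi)*f x1) :=
    mul_lt_mul_of_pos_left hP (by linarith)
  nlinarith [A, B, C]

/-- Single-crossing claim: if `p_i` is lower than `p_j`, lies to the left of a
connected portion `T'` of the terrain, and sees every point of `T'`, then the
perpendicular bisector of `p_i` and `p_j` meets `T'` at most once. -/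
theorem bisector_single_crossing (f : ℝ → ℝ) (hf : Continuous f)
    (xi xj : ℝ) (hy : f xi < f xj)
    (I : Set ℝ) (hI : I.OrdConnected)
    (hleft : ∀ x ∈ I, xi < x)
    (hvis : ∀ x ∈ I, sees f (xi, f xi) (x, f x)) :
    Set.Subsingleton {q : ℝ × ℝ | q.1 ∈ I ∧ q.2 = f q.1 ∧
      edist2 q (xi, f xi) = edist2 q (xj, f xj)} := by
  rintro ⟨x1, y1⟩ ⟨hx1, hy1, hd1⟩ ⟨x2, y2⟩ ⟨hx2, hy2, hd2⟩
  simp only [Set.mem_setOf_eq] at *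
  subst hy1; subst hy2
  have e1 : (x1 - xi)^2 + (f x1 - f xi)^2 = (x1 - xj)^2 + (f x1 - f xj)^2 :=
    sqrt_eq_of_eq' (by positivity) (by positivity) hd1
  have e2 : (x2 - xi)^2 + (f x2 - f xi)^2 = (x2 - xj)^2 + (f x2 - f xj)^2 :=
    sqrt_eq_of_eq' (by positivity) (by positivity) hd2
  rcases lt_trichotomy x1 x2 with h | h | h
  · exact absurd (key_single_cross f xi xj hy x1 x2 h (hleft x1 hx1)
      (hvis x2 hx2) e1 e2) (by simp)
  · simp [h]
  · exact absurd (key_single_cross f xi xj hy x2 x1 h (hleft x2 hx2)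
      (hvis x1 hx1) e2 e1) (by simp)
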